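/- If n ≡ 2 (mod 3) and n ≥ 2, then for every edge e of G_{n,2}, γ_t(G_{n,2} − e) = γ_t(G_{n,2}); together with the existence of a pair of edges whose removal increases γ_t, this gives b_t(G_{n,2}) = 2. -/

import Mathlib

open SimpleGraph

/-- The grid graph `G_{n,m}`, the Cartesian (box) product of paths `P_n` and `P_m`. -/
def gridGraph (n m : ℕ) : SimpleGraph (Fin n × Fin m) :=
  (pathGraph n) □ (pathGraph m)

/-- `D` is a total dominating set of `G`: every vertex has a neighbor in `D`. -/
def IsTotalDomSet {V : Type*} (G : SimpleGraph V) (D : Set V) : Prop :=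
  ∀ v : V, ∃ u ∈ D, G.Adj v u

/-- The total domination number of `G`. -/
noncomputable def totalDomNum {V : Type*} [Fintype V] (G : SimpleGraph V) : ℕ :=
  sInf {k | ∃ D : Finset V, IsTotalDomSet G ↑D ∧ D.card = k}

/-- The total bondage number: the least number of edges whose removal increases
the total domination number. -/
noncomputable def totalBondage {V : Type*} [Fintype V] (G : SimpleGraph V) : ℕ :=
  sInf {k | ∃ F : Finset (Sym2 V), ↑F ⊆ G.edgeSet ∧ F.card = k ∧
    totalDomNum (G.deleteEdges ↑F) > totalDomNum G}

section Aux

lemma grid_adj {n : ℕ} {a b : Fin n × Fin 2} :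
    (gridGraph n 2).Adj a b ↔
      ((a.1.val + 1 = b.1.val ∨ b.1.val + 1 = a.1.val) ∧ a.2.val = b.2.val) ∨
      (a.1.val = b.1.val ∧ (a.2.val + 1 = b.2.val ∨ b.2.val + 1 = a.2.val)) := by
  simp [gridGraph, boxProd_adj, pathGraph_adj, Fin.ext_iff]
  tauto

def vx (n : ℕ) (hn : 0 < n) (c r : ℕ) : Fin n × Fin 2 :=
  (⟨c % n, Nat.mod_lt _ hn⟩, ⟨r % 2, Nat.mod_lt _ (by omega)⟩)

lemma vx_eq' {n : ℕ} (hn : 0 < n) {p : Fin n × Fin 2} {c r : ℕ}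
    (h1 : c % n = p.1.val) (h2 : r % 2 = p.2.val) : vx n hn c r = p := by
  rw [Prod.ext_iff]; exact ⟨Fin.ext h1, Fin.ext h2⟩

lemma nbr_card_le {n : ℕ} (hn : 0 < n) (u : Fin n × Fin 2) (s : Finset (Fin n × Fin 2))
    (hs : ∀ v ∈ s, (gridGraph n 2).Adj u v) : s.card ≤ 3 := by
  have hsub : s ⊆ {vx n hn (u.1.val - 1) u.2.val, vx n hn (u.1.val + 1) u.2.val,
      vx n hn u.1.val (1 - u.2.val)} := by
    intro v hv
    have hadj := hs v hv
    rw [grid_adj] at hadj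
    have h3 : u.1.val < n := u.1.isLt
    have h4 : u.2.val < 2 := u.2.isLt
    have h1 : v.1.val < n := v.1.isLt
    have h2 : v.2.val < 2 := v.2.isLt
    simp only [Finset.mem_insert, Finset.mem_singleton]
    rcases hadj with ⟨h5 | h5, h6⟩ | ⟨h5, h6⟩
    · right; left
      refine (vx_eq' hn ?_ ?_).symm
      · rw [Nat.mod_eq_of_lt (by omega)]; omega
      · omega
    · left
      refine (vx_eq' hn ?_ ?_).symm
      · rw [Nat.mod_eq_of_lt (by omega)]; omega
      · omega
    · right; right
      refine (vx_eq' hn ?_ ?_).symm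
      · rw [Nat.mod_eq_of_lt (by omega)]; omega
      · omega
  calc s.card ≤ _ := Finset.card_le_card hsub
    _ ≤ 3 := by
      apply le_trans (Finset.card_insert_le _ _)
      have := Finset.card_insert_le (vx n hn (u.1.val + 1) u.2.val) {vx n hn u.1.val (1 - u.2.val)}
      simp at this ⊢
      omega

lemma tds_lb {n : ℕ} (hn : 0 < n) (G : SimpleGraph (Fin n × Fin 2)) (hG : G ≤ gridGraph n 2)
    (D : Finset (Fin n × Fin 2)) (hD : IsTotalDomSet G ↑D) : 2 * n ≤ 3 * D.card := by
  classical
  have hsub : (Finset.univ : Finset (Fin n × Fin 2)) ⊆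
      D.biUnion (fun u => Finset.univ.filter (fun v => (gridGraph n 2).Adj u v)) := by
    intro v _
    obtain ⟨u, hu, hadj⟩ := hD v
    exact Finset.mem_biUnion.2 ⟨u, hu, Finset.mem_filter.2 ⟨Finset.mem_univ _, (hG hadj).symm⟩⟩
  have h1 := Finset.card_le_card hsub
  have h2 := Finset.card_biUnion_le (s := D)
    (t := fun u => Finset.univ.filter (fun v => (gridGraph n 2).Adj u v))
  have h3 : ∑ u ∈ D, (Finset.univ.filter (fun v => (gridGraph n 2).Adj u v)).card ≤ D.card * 3 := by
    calc _ ≤ ∑ _u ∈ D, 3 :=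
        Finset.sum_le_sum (fun u _ => nbr_card_le hn u _ (fun v hv => (Finset.mem_filter.1 hv).2))
      _ = D.card * 3 := by simp [Finset.sum_const, mul_comm]
  have h4 : (Finset.univ : Finset (Fin n × Fin 2)).card = 2 * n := by
    simp [Finset.card_univ]; ring
  omega

def Dset (n : ℕ) (hn : 0 < n) (g : ℕ → ℕ × ℕ) (m : ℕ) : Finset (Fin n × Fin 2) :=
  (Finset.range m).image (fun s => vx n hn (g s).1 (g s).2)

lemma Dset_card_le {n : ℕ} (hn : 0 < n) (g : ℕ → ℕ × ℕ) (m : ℕ) :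
    (Dset n hn g m).card ≤ m := by
  simpa [Dset] using Finset.card_image_le (s := Finset.range m) (f := fun s => vx n hn (g s).1 (g s).2)

lemma mem_Dset {n : ℕ} {hn : 0 < n} {g : ℕ → ℕ × ℕ} {m : ℕ} {v : Fin n × Fin 2}
    (s : ℕ) (hs : s < m) (h : vx n hn (g s).1 (g s).2 = v) : v ∈ Dset n hn g m :=
  Finset.mem_image.2 ⟨s, Finset.mem_range.2 hs, h⟩

lemma tds_mono {V : Type*} {G G' : SimpleGraph V} {D : Set V} (h : G ≤ G')
    (hD : IsTotalDomSet G D) : IsTotalDomSet G' D := by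
  intro v
  obtain ⟨u, hu, ha⟩ := hD v
  exact ⟨u, hu, h ha⟩

lemma tdn_eq_of {n k : ℕ} (hk : n = 3*k+2) (G : SimpleGraph (Fin n × Fin 2))
    (hG : G ≤ gridGraph n 2) (D : Finset (Fin n × Fin 2)) (hD : IsTotalDomSet G ↑D)
    (hc : D.card ≤ 2*k+2) : totalDomNum G = 2*k+2 := by
  have hlb : ∀ m ∈ {m | ∃ D : Finset (Fin n × Fin 2), IsTotalDomSet G ↑D ∧ D.card = m},
      2*k+2 ≤ m := by
    rintro m ⟨D', hD', rfl⟩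
    have := tds_lb (by omega) G hG D' hD'
    omega
  have hmem : D.card ∈ {m | ∃ D' : Finset (Fin n × Fin 2), IsTotalDomSet G ↑D' ∧ D'.card = m} :=
    ⟨D, hD, rfl⟩
  have h1 := Nat.sInf_le hmem
  have h2 := hlb _ (Nat.sInf_mem ⟨_, hmem⟩)
  unfold totalDomNum
  omega

end Aux

lemma tds_D1 {n k : ℕ} (hk : n = 3*k+2) (hn : 0 < n) (e : Sym2 (Fin n × Fin 2))
    (he : ∀ a b : Fin n × Fin 2, s(a,b) = e →
      (a.1.val = b.1.val ∧ a.1.val % 3 ≠ 1) ∨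
      (a.2.val = b.2.val ∧ ((a.1.val % 3 = 2 ∧ a.1.val + 1 = b.1.val) ∨
        (b.1.val % 3 = 2 ∧ b.1.val + 1 = a.1.val)))) :
    IsTotalDomSet ((gridGraph n 2).deleteEdges {e})
      ↑(Dset n hn (fun s => (3*(s/2)+1, s%2)) (2*k+2)) := by
  rintro ⟨⟨i, hi⟩, ⟨j, hj⟩⟩
  rcases (show i % 3 = 0 ∨ i % 3 = 1 ∨ i % 3 = 2 by omega) with h | h | h
  · refine ⟨(⟨i+1, by omega⟩, ⟨j, hj⟩), Finset.mem_coe.2 (mem_Dset (2*(i/3)+j) (by omega)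
      (vx_eq' hn (by show (3*((2*(i/3)+j)/2)+1) % n = i+1; rw [Nat.mod_eq_of_lt (by omega)]; omega)
        (by show ((2*(i/3)+j)%2) % 2 = j; omega))), ?_⟩
    rw [SimpleGraph.deleteEdges_adj]
    refine ⟨grid_adj.2 (Or.inl ⟨Or.inl rfl, rfl⟩), ?_⟩
    intro hmem
    rw [Set.mem_singleton_iff] at hmem
    rcases he _ _ hmem with ⟨h5, h6⟩ | ⟨h5, h6⟩ <;> simp only [] at h5 h6 <;> omega
  · refine ⟨(⟨i, hi⟩, ⟨1-j, by omega⟩), Finset.mem_coe.2 (mem_Dset (2*(i/3)+(1-j)) (by omega)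
      (vx_eq' hn (by show (3*((2*(i/3)+(1-j))/2)+1) % n = i; rw [Nat.mod_eq_of_lt (by omega)]; omega)
        (by show ((2*(i/3)+(1-j))%2) % 2 = 1-j; omega))), ?_⟩
    rw [SimpleGraph.deleteEdges_adj]
    refine ⟨grid_adj.2 (Or.inr ⟨rfl, by show j+1 = 1-j ∨ (1-j)+1 = j; omega⟩), ?_⟩
    intro hmem
    rw [Set.mem_singleton_iff] at hmem
    rcases he _ _ hmem with ⟨h5, h6⟩ | ⟨h5, h6⟩ <;> simp only [] at h5 h6 <;> omega
  · refine ⟨(⟨i-1, by omega⟩, ⟨j, hj⟩), Finset.mem_coe.2 (mem_Dset (2*(i/3)+j) (by omega)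
      (vx_eq' hn (by show (3*((2*(i/3)+j)/2)+1) % n = i-1; rw [Nat.mod_eq_of_lt (by omega)]; omega)
        (by show ((2*(i/3)+j)%2) % 2 = j; omega))), ?_⟩
    rw [SimpleGraph.deleteEdges_adj]
    refine ⟨grid_adj.2 (Or.inl ⟨Or.inr (by show (i-1)+1 = i; omega), rfl⟩), ?_⟩
    intro hmem
    rw [Set.mem_singleton_iff] at hmem
    rcases he _ _ hmem with ⟨h5, h6⟩ | ⟨h5, h6⟩ <;> simp only [] at h5 h6 <;> omega

lemma tds_D0 {n k : ℕ} (hk : n = 3*k+2) (hn : 0 < n) (e : Sym2 (Fin n × Fin 2))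
    (he : ∀ a b : Fin n × Fin 2, s(a,b) = e →
      (a.1.val = b.1.val ∧ a.1.val % 3 ≠ 0) ∨
      (a.2.val = b.2.val ∧ ((a.1.val % 3 = 1 ∧ a.1.val + 1 = b.1.val) ∨
        (b.1.val % 3 = 1 ∧ b.1.val + 1 = a.1.val)))) :
    IsTotalDomSet ((gridGraph n 2).deleteEdges {e})
      ↑(Dset n hn (fun s => (3*(s/2), s%2)) (2*k+2)) := by
  rintro ⟨⟨i, hi⟩, ⟨j, hj⟩⟩
  rcases (show i % 3 = 0 ∨ i % 3 = 1 ∨ i % 3 = 2 by omega) with h | h | h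
  · refine ⟨(⟨i, hi⟩, ⟨1-j, by omega⟩), Finset.mem_coe.2 (mem_Dset (2*(i/3)+(1-j)) (by omega)
      (vx_eq' hn (by show (3*((2*(i/3)+(1-j))/2)) % n = i; rw [Nat.mod_eq_of_lt (by omega)]; omega)
        (by show ((2*(i/3)+(1-j))%2) % 2 = 1-j; omega))), ?_⟩
    rw [SimpleGraph.deleteEdges_adj]
    refine ⟨grid_adj.2 (Or.inr ⟨rfl, by show j+1 = 1-j ∨ (1-j)+1 = j; omega⟩), ?_⟩
    intro hmem
    rw [Set.mem_singleton_iff] at hmem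
    rcases he _ _ hmem with ⟨h5, h6⟩ | ⟨h5, h6⟩ <;> simp only [] at h5 h6 <;> omega
  · refine ⟨(⟨i-1, by omega⟩, ⟨j, hj⟩), Finset.mem_coe.2 (mem_Dset (2*(i/3)+j) (by omega)
      (vx_eq' hn (by show (3*((2*(i/3)+j)/2)) % n = i-1; rw [Nat.mod_eq_of_lt (by omega)]; omega)
        (by show ((2*(i/3)+j)%2) % 2 = j; omega))), ?_⟩
    rw [SimpleGraph.deleteEdges_adj]
    refine ⟨grid_adj.2 (Or.inl ⟨Or.inr (by show (i-1)+1 = i; omega), rfl⟩), ?_⟩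
    intro hmem
    rw [Set.mem_singleton_iff] at hmem
    rcases he _ _ hmem with ⟨h5, h6⟩ | ⟨h5, h6⟩ <;> simp only [] at h5 h6 <;> omega
  · refine ⟨(⟨i+1, by omega⟩, ⟨j, hj⟩), Finset.mem_coe.2 (mem_Dset (2*((i+1)/3)+j) (by omega)
      (vx_eq' hn (by show (3*((2*((i+1)/3)+j)/2)) % n = i+1; rw [Nat.mod_eq_of_lt (by omega)]; omega)
        (by show ((2*((i+1)/3)+j)%2) % 2 = j; omega))), ?_⟩
    rw [SimpleGraph.deleteEdges_adj]
    refine ⟨grid_adj.2 (Or.inl ⟨Or.inl rfl, rfl⟩), ?_⟩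
    intro hmem
    rw [Set.mem_singleton_iff] at hmem
    rcases he _ _ hmem with ⟨h5, h6⟩ | ⟨h5, h6⟩ <;> simp only [] at h5 h6 <;> omega

def gspec (t j0 : ℕ) (s : ℕ) : ℕ × ℕ :=
  if s / 2 = t then (3*t + s % 2, 1 - j0)
  else if s / 2 < t then (3*(s/2)+1, s % 2) else (3*(s/2), s % 2)

lemma gspec_eq {t j0 s : ℕ} (h : s / 2 = t) : gspec t j0 s = (3*t + s % 2, 1 - j0) := by
  unfold gspec; rw [if_pos h]

lemma gspec_lt {t j0 s : ℕ} (h : s / 2 < t) : gspec t j0 s = (3*(s/2)+1, s % 2) := by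
  unfold gspec; rw [if_neg (by omega), if_pos h]

lemma gspec_gt {t j0 s : ℕ} (h : t < s / 2) : gspec t j0 s = (3*(s/2), s % 2) := by
  unfold gspec; rw [if_neg (by omega), if_neg (by omega)]

lemma tds_Dspec {n k : ℕ} (hk : n = 3*k+2) (hn : 0 < n) (t j0 : ℕ) (ht : t ≤ k) (hj0 : j0 < 2)
    (e : Sym2 (Fin n × Fin 2))
    (he : ∀ a b : Fin n × Fin 2, s(a,b) = e →
      a.2.val = b.2.val ∧ a.2.val = j0 ∧
        ((a.1.val = 3*t ∧ b.1.val = 3*t+1) ∨ (b.1.val = 3*t ∧ a.1.val = 3*t+1))) :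
    IsTotalDomSet ((gridGraph n 2).deleteEdges {e})
      ↑(Dset n hn (gspec t j0) (2*k+2)) := by
  rintro ⟨⟨i, hi⟩, ⟨j, hj⟩⟩
  have hedge : ∀ u : Fin n × Fin 2, ¬ (s((⟨i,hi⟩, (⟨j,hj⟩ : Fin 2)), u) ∈ ({e} : Set (Sym2 (Fin n × Fin 2)))) →
      True := fun _ _ => trivial
  rcases (show (i < 3*t ∧ i%3 = 0) ∨ (i < 3*t ∧ i%3 = 1) ∨ (i < 3*t ∧ i%3 = 2) ∨
      (i = 3*t ∧ j = j0) ∨ (i = 3*t ∧ j = 1-j0) ∨ (i = 3*t+1 ∧ j = j0) ∨ (i = 3*t+1 ∧ j = 1-j0) ∨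
      i = 3*t+2 ∨ (3*t+3 ≤ i ∧ i%3 = 0) ∨ (3*t+3 ≤ i ∧ i%3 = 1) ∨ (3*t+3 ≤ i ∧ i%3 = 2)
      by omega) with ⟨h1,h2⟩|⟨h1,h2⟩|⟨h1,h2⟩|⟨h1,h2⟩|⟨h1,h2⟩|⟨h1,h2⟩|⟨h1,h2⟩|h1|⟨h1,h2⟩|⟨h1,h2⟩|⟨h1,h2⟩
  · -- i < 3t, i%3=0 : u = (i+1, j)
    refine ⟨(⟨i+1, by omega⟩, ⟨j, hj⟩), Finset.mem_coe.2 (mem_Dset (2*(i/3)+j) (by omega) ?_), ?_⟩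
    · rw [gspec_lt (by omega)]
      exact vx_eq' hn (by show (3*((2*(i/3)+j)/2)+1) % n = i+1; rw [Nat.mod_eq_of_lt (by omega)]; omega)
        (by show ((2*(i/3)+j)%2) % 2 = j; omega)
    · rw [SimpleGraph.deleteEdges_adj]
      refine ⟨grid_adj.2 (Or.inl ⟨Or.inl rfl, rfl⟩), ?_⟩
      intro hmem; rw [Set.mem_singleton_iff] at hmem
      obtain ⟨h5, h6, h7⟩ := he _ _ hmem; simp only [] at h5 h6 h7; omega
  · -- i < 3t, i%3=1 : u = (i, 1-j)
    refine ⟨(⟨i, hi⟩, ⟨1-j, by omega⟩), Finset.mem_coe.2 (mem_Dset (2*(i/3)+(1-j)) (by omega) ?_), ?_⟩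
    · rw [gspec_lt (by omega)]
      exact vx_eq' hn (by show (3*((2*(i/3)+(1-j))/2)+1) % n = i; rw [Nat.mod_eq_of_lt (by omega)]; omega)
        (by show ((2*(i/3)+(1-j))%2) % 2 = 1-j; omega)
    · rw [SimpleGraph.deleteEdges_adj]
      refine ⟨grid_adj.2 (Or.inr ⟨rfl, by show j+1 = 1-j ∨ (1-j)+1 = j; omega⟩), ?_⟩
      intro hmem; rw [Set.mem_singleton_iff] at hmem
      obtain ⟨h5, h6, h7⟩ := he _ _ hmem; simp only [] at h5 h6 h7; omega
  · -- i < 3t, i%3=2 : u = (i-1, j)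
    refine ⟨(⟨i-1, by omega⟩, ⟨j, hj⟩), Finset.mem_coe.2 (mem_Dset (2*(i/3)+j) (by omega) ?_), ?_⟩
    · rw [gspec_lt (by omega)]
      exact vx_eq' hn (by show (3*((2*(i/3)+j)/2)+1) % n = i-1; rw [Nat.mod_eq_of_lt (by omega)]; omega)
        (by show ((2*(i/3)+j)%2) % 2 = j; omega)
    · rw [SimpleGraph.deleteEdges_adj]
      refine ⟨grid_adj.2 (Or.inl ⟨Or.inr (by show (i-1)+1 = i; omega), rfl⟩), ?_⟩
      intro hmem; rw [Set.mem_singleton_iff] at hmem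
      obtain ⟨h5, h6, h7⟩ := he _ _ hmem; simp only [] at h5 h6 h7; omega
  · -- i = 3t, j = j0 : u = (3t, 1-j0)
    refine ⟨(⟨3*t, by omega⟩, ⟨1-j0, by omega⟩), Finset.mem_coe.2 (mem_Dset (2*t) (by omega) ?_), ?_⟩
    · rw [gspec_eq (by omega)]
      exact vx_eq' hn (by show (3*t + (2*t)%2) % n = 3*t; rw [Nat.mod_eq_of_lt (by omega)]; omega)
        (by show (1-j0) % 2 = 1-j0; omega)
    · rw [SimpleGraph.deleteEdges_adj]
      refine ⟨grid_adj.2 (Or.inr ⟨by show i = 3*t; omega, by show j+1 = 1-j0 ∨ (1-j0)+1 = j; omega⟩), ?_⟩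
      intro hmem; rw [Set.mem_singleton_iff] at hmem
      obtain ⟨h5, h6, h7⟩ := he _ _ hmem; simp only [] at h5 h6 h7; omega
  · -- i = 3t, j = 1-j0 : u = (3t+1, 1-j0)
    refine ⟨(⟨3*t+1, by omega⟩, ⟨1-j0, by omega⟩), Finset.mem_coe.2 (mem_Dset (2*t+1) (by omega) ?_), ?_⟩
    · rw [gspec_eq (by omega)]
      exact vx_eq' hn (by show (3*t + (2*t+1)%2) % n = 3*t+1; rw [Nat.mod_eq_of_lt (by omega)]; omega)
        (by show (1-j0) % 2 = 1-j0; omega)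
    · rw [SimpleGraph.deleteEdges_adj]
      refine ⟨grid_adj.2 (Or.inl ⟨Or.inl (by show i+1 = 3*t+1; omega), by show j = 1-j0; omega⟩), ?_⟩
      intro hmem; rw [Set.mem_singleton_iff] at hmem
      obtain ⟨h5, h6, h7⟩ := he _ _ hmem; simp only [] at h5 h6 h7; omega
  · -- i = 3t+1, j = j0 : u = (3t+1, 1-j0)
    refine ⟨(⟨3*t+1, by omega⟩, ⟨1-j0, by omega⟩), Finset.mem_coe.2 (mem_Dset (2*t+1) (by omega) ?_), ?_⟩
    · rw [gspec_eq (by omega)]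
      exact vx_eq' hn (by show (3*t + (2*t+1)%2) % n = 3*t+1; rw [Nat.mod_eq_of_lt (by omega)]; omega)
        (by show (1-j0) % 2 = 1-j0; omega)
    · rw [SimpleGraph.deleteEdges_adj]
      refine ⟨grid_adj.2 (Or.inr ⟨by show i = 3*t+1; omega, by show j+1 = 1-j0 ∨ (1-j0)+1 = j; omega⟩), ?_⟩
      intro hmem; rw [Set.mem_singleton_iff] at hmem
      obtain ⟨h5, h6, h7⟩ := he _ _ hmem; simp only [] at h5 h6 h7; omega
  · -- i = 3t+1, j = 1-j0 : u = (3t, 1-j0)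
    refine ⟨(⟨3*t, by omega⟩, ⟨1-j0, by omega⟩), Finset.mem_coe.2 (mem_Dset (2*t) (by omega) ?_), ?_⟩
    · rw [gspec_eq (by omega)]
      exact vx_eq' hn (by show (3*t + (2*t)%2) % n = 3*t; rw [Nat.mod_eq_of_lt (by omega)]; omega)
        (by show (1-j0) % 2 = 1-j0; omega)
    · rw [SimpleGraph.deleteEdges_adj]
      refine ⟨grid_adj.2 (Or.inl ⟨Or.inr (by show 3*t+1 = i; omega), by show j = 1-j0; omega⟩), ?_⟩
      intro hmem; rw [Set.mem_singleton_iff] at hmem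
      obtain ⟨h5, h6, h7⟩ := he _ _ hmem; simp only [] at h5 h6 h7; omega
  · -- i = 3t+2 : u = (i+1, j)  (t < k)
    refine ⟨(⟨i+1, by omega⟩, ⟨j, hj⟩), Finset.mem_coe.2 (mem_Dset (2*(t+1)+j) (by omega) ?_), ?_⟩
    · rw [gspec_gt (by omega)]
      exact vx_eq' hn (by show (3*((2*(t+1)+j)/2)) % n = i+1; rw [Nat.mod_eq_of_lt (by omega)]; omega)
        (by show ((2*(t+1)+j)%2) % 2 = j; omega)
    · rw [SimpleGraph.deleteEdges_adj]
      refine ⟨grid_adj.2 (Or.inl ⟨Or.inl rfl, rfl⟩), ?_⟩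
      intro hmem; rw [Set.mem_singleton_iff] at hmem
      obtain ⟨h5, h6, h7⟩ := he _ _ hmem; simp only [] at h5 h6 h7; omega
  · -- i ≥ 3t+3, i%3=0 : u = (i, 1-j)
    refine ⟨(⟨i, hi⟩, ⟨1-j, by omega⟩), Finset.mem_coe.2 (mem_Dset (2*(i/3)+(1-j)) (by omega) ?_), ?_⟩
    · rw [gspec_gt (by omega)]
      exact vx_eq' hn (by show (3*((2*(i/3)+(1-j))/2)) % n = i; rw [Nat.mod_eq_of_lt (by omega)]; omega)
        (by show ((2*(i/3)+(1-j))%2) % 2 = 1-j; omega)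
    · rw [SimpleGraph.deleteEdges_adj]
      refine ⟨grid_adj.2 (Or.inr ⟨rfl, by show j+1 = 1-j ∨ (1-j)+1 = j; omega⟩), ?_⟩
      intro hmem; rw [Set.mem_singleton_iff] at hmem
      obtain ⟨h5, h6, h7⟩ := he _ _ hmem; simp only [] at h5 h6 h7; omega
  · -- i ≥ 3t+3, i%3=1 : u = (i-1, j)
    refine ⟨(⟨i-1, by omega⟩, ⟨j, hj⟩), Finset.mem_coe.2 (mem_Dset (2*((i-1)/3)+j) (by omega) ?_), ?_⟩
    · rw [gspec_gt (by omega)]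
      exact vx_eq' hn (by show (3*((2*((i-1)/3)+j)/2)) % n = i-1; rw [Nat.mod_eq_of_lt (by omega)]; omega)
        (by show ((2*((i-1)/3)+j)%2) % 2 = j; omega)
    · rw [SimpleGraph.deleteEdges_adj]
      refine ⟨grid_adj.2 (Or.inl ⟨Or.inr (by show (i-1)+1 = i; omega), rfl⟩), ?_⟩
      intro hmem; rw [Set.mem_singleton_iff] at hmem
      obtain ⟨h5, h6, h7⟩ := he _ _ hmem; simp only [] at h5 h6 h7; omega
  · -- i ≥ 3t+3, i%3=2 : u = (i+1, j)
    refine ⟨(⟨i+1, by omega⟩, ⟨j, hj⟩), Finset.mem_coe.2 (mem_Dset (2*((i+1)/3)+j) (by omega) ?_), ?_⟩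
    · rw [gspec_gt (by omega)]
      exact vx_eq' hn (by show (3*((2*((i+1)/3)+j)/2)) % n = i+1; rw [Nat.mod_eq_of_lt (by omega)]; omega)
        (by show ((2*((i+1)/3)+j)%2) % 2 = j; omega)
    · rw [SimpleGraph.deleteEdges_adj]
      refine ⟨grid_adj.2 (Or.inl ⟨Or.inl rfl, rfl⟩), ?_⟩
      intro hmem; rw [Set.mem_singleton_iff] at hmem
      obtain ⟨h5, h6, h7⟩ := he _ _ hmem; simp only [] at h5 h6 h7; omega

lemma tdn_grid {n k : ℕ} (hk : n = 3*k+2) : totalDomNum (gridGraph n 2) = 2*k+2 := by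
  have hn : 0 < n := by omega
  have hD := tds_D1 hk hn (s(((⟨0, hn⟩ : Fin n), (0 : Fin 2)), ((⟨0, hn⟩ : Fin n), (0 : Fin 2))))
    (by
      intro a b hab
      rw [Sym2.eq_iff] at hab
      left
      rcases hab with ⟨rfl, rfl⟩ | ⟨rfl, rfl⟩ <;>
        exact ⟨rfl, by show (0:ℕ) % 3 ≠ 1; omega⟩)
  exact tdn_eq_of hk _ le_rfl _ (tds_mono (SimpleGraph.deleteEdges_le _) hD)
    (Dset_card_le _ _ _)

lemma part1 {n k : ℕ} (hk : n = 3*k+2) :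
    ∀ e ∈ (gridGraph n 2).edgeSet,
      totalDomNum ((gridGraph n 2).deleteEdges {e}) = 2*k+2 := by
  have hn : 0 < n := by omega
  intro e he
  induction e using Sym2.ind with
  | _ u v =>
    rw [SimpleGraph.mem_edgeSet] at he
    obtain ⟨⟨x, hx⟩, ⟨r, hr⟩⟩ := u
    obtain ⟨⟨y, hy⟩, ⟨q, hq⟩⟩ := v
    rw [grid_adj] at he
    simp only [] at he
    rcases he with ⟨h1 | h1, h2⟩ | ⟨h1, h2⟩
    · -- rail starting at x
      rcases (show x % 3 = 0 ∨ x % 3 = 1 ∨ x % 3 = 2 by omega) with hm | hm | hm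
      · refine tdn_eq_of hk _ (SimpleGraph.deleteEdges_le _) _
          (tds_Dspec hk hn (x/3) r (by omega) (by omega) _ ?_) (Dset_card_le _ _ _)
        intro a b hab
        rw [Sym2.eq_iff] at hab
        rcases hab with ⟨rfl, rfl⟩ | ⟨rfl, rfl⟩ <;> refine ⟨?_, ?_, ?_⟩ <;>
          (try simp only []) <;> first | trivial | omega
      · refine tdn_eq_of hk _ (SimpleGraph.deleteEdges_le _) _
          (tds_D0 hk hn _ ?_) (Dset_card_le _ _ _)
        intro a b hab
        rw [Sym2.eq_iff] at hab
        rcases hab with ⟨rfl, rfl⟩ | ⟨rfl, rfl⟩ <;> simp only [] <;> omega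
      · refine tdn_eq_of hk _ (SimpleGraph.deleteEdges_le _) _
          (tds_D1 hk hn _ ?_) (Dset_card_le _ _ _)
        intro a b hab
        rw [Sym2.eq_iff] at hab
        rcases hab with ⟨rfl, rfl⟩ | ⟨rfl, rfl⟩ <;> simp only [] <;> omega
    · -- rail starting at y
      rcases (show y % 3 = 0 ∨ y % 3 = 1 ∨ y % 3 = 2 by omega) with hm | hm | hm
      · refine tdn_eq_of hk _ (SimpleGraph.deleteEdges_le _) _
          (tds_Dspec hk hn (y/3) q (by omega) (by omega) _ ?_) (Dset_card_le _ _ _)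
        intro a b hab
        rw [Sym2.eq_iff] at hab
        rcases hab with ⟨rfl, rfl⟩ | ⟨rfl, rfl⟩ <;> refine ⟨?_, ?_, ?_⟩ <;>
          (try simp only []) <;> first | trivial | omega
      · refine tdn_eq_of hk _ (SimpleGraph.deleteEdges_le _) _
          (tds_D0 hk hn _ ?_) (Dset_card_le _ _ _)
        intro a b hab
        rw [Sym2.eq_iff] at hab
        rcases hab with ⟨rfl, rfl⟩ | ⟨rfl, rfl⟩ <;> simp only [] <;> omega
      · refine tdn_eq_of hk _ (SimpleGraph.deleteEdges_le _) _
          (tds_D1 hk hn _ ?_) (Dset_card_le _ _ _)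
        intro a b hab
        rw [Sym2.eq_iff] at hab
        rcases hab with ⟨rfl, rfl⟩ | ⟨rfl, rfl⟩ <;> simp only [] <;> omega
    · -- rung at column x
      rcases (show x % 3 = 1 ∨ x % 3 ≠ 1 by omega) with hm | hm
      · refine tdn_eq_of hk _ (SimpleGraph.deleteEdges_le _) _
          (tds_D0 hk hn _ ?_) (Dset_card_le _ _ _)
        intro a b hab
        rw [Sym2.eq_iff] at hab
        rcases hab with ⟨rfl, rfl⟩ | ⟨rfl, rfl⟩ <;> simp only [] <;> omega
      · refine tdn_eq_of hk _ (SimpleGraph.deleteEdges_le _) _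
          (tds_D1 hk hn _ ?_) (Dset_card_le _ _ _)
        intro a b hab
        rw [Sym2.eq_iff] at hab
        rcases hab with ⟨rfl, rfl⟩ | ⟨rfl, rfl⟩ <;> simp only [] <;> omega
lemma forced_lb {n k : ℕ} (hk : n = 3*k+2) (hn : 0 < n) (hn1 : 1 < n)
    (D : Finset (Fin n × Fin 2))
    (hD : IsTotalDomSet ((gridGraph n 2).deleteEdges
      ↑({s(((⟨0, hn⟩ : Fin n), (⟨0, Nat.zero_lt_two⟩ : Fin 2)),
           ((⟨1, hn1⟩ : Fin n), (⟨0, Nat.zero_lt_two⟩ : Fin 2))),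
         s(((⟨0, hn⟩ : Fin n), (⟨1, Nat.one_lt_two⟩ : Fin 2)),
           ((⟨1, hn1⟩ : Fin n), (⟨1, Nat.one_lt_two⟩ : Fin 2)))} : Finset (Sym2 (Fin n × Fin 2))))
      ↑D) :
    2*k+3 ≤ D.card := by
  classical
  set a0 : Fin n × Fin 2 := (⟨0, hn⟩, ⟨0, Nat.zero_lt_two⟩) with ha0
  set a1 : Fin n × Fin 2 := (⟨0, hn⟩, ⟨1, Nat.one_lt_two⟩) with ha1
  set b0 : Fin n × Fin 2 := (⟨1, hn1⟩, ⟨0, Nat.zero_lt_two⟩) with hb0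
  set b1 : Fin n × Fin 2 := (⟨1, hn1⟩, ⟨1, Nat.one_lt_two⟩) with hb1
  have hne01 : a0 ≠ a1 := by simp [ha0, ha1, Prod.ext_iff, Fin.ext_iff]
  -- (0,0) ∈ D
  have h0 : a0 ∈ D := by
    obtain ⟨u, hu, hadj⟩ := hD a1
    rw [SimpleGraph.deleteEdges_adj] at hadj
    obtain ⟨hadj1, hnot⟩ := hadj
    obtain ⟨⟨yy, hyy⟩, ⟨qq, hqq⟩⟩ := u
    rw [grid_adj] at hadj1
    try simp only [ha1] at hadj1
    rcases hadj1 with ⟨h1 | h1, h2⟩ | ⟨h1, h2⟩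
    · exfalso
      apply hnot
      have hub : ((⟨yy, hyy⟩, ⟨qq, hqq⟩) : Fin n × Fin 2) = b1 := by
        rw [hb1, Prod.ext_iff]
        exact ⟨Fin.ext (by (try simp only [] at h1 ⊢); omega), Fin.ext (by (try simp only [] at h2 ⊢); omega)⟩
      rw [hub]
      simp
    · exfalso
      (try simp only [] at h1)
      omega
    · have hua : ((⟨yy, hyy⟩, ⟨qq, hqq⟩) : Fin n × Fin 2) = a0 := by
        rw [ha0, Prod.ext_iff]
        exact ⟨Fin.ext (by (try simp only [] at h1 ⊢); omega), Fin.ext (by (try simp only [] at h2 ⊢); omega)⟩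
      rw [← hua]
      exact Finset.mem_coe.1 hu
  -- (0,1) ∈ D
  have h1' : a1 ∈ D := by
    obtain ⟨u, hu, hadj⟩ := hD a0
    rw [SimpleGraph.deleteEdges_adj] at hadj
    obtain ⟨hadj1, hnot⟩ := hadj
    obtain ⟨⟨yy, hyy⟩, ⟨qq, hqq⟩⟩ := u
    rw [grid_adj] at hadj1
    try simp only [ha0] at hadj1
    rcases hadj1 with ⟨h1 | h1, h2⟩ | ⟨h1, h2⟩
    · exfalso
      apply hnot
      have hub : ((⟨yy, hyy⟩, ⟨qq, hqq⟩) : Fin n × Fin 2) = b0 := by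
        rw [hb0, Prod.ext_iff]
        exact ⟨Fin.ext (by (try simp only [] at h1 ⊢); omega), Fin.ext (by (try simp only [] at h2 ⊢); omega)⟩
      rw [hub]
      simp
    · exfalso
      (try simp only [] at h1)
      omega
    · have hua : ((⟨yy, hyy⟩, ⟨qq, hqq⟩) : Fin n × Fin 2) = a1 := by
        rw [ha1, Prod.ext_iff]
        exact ⟨Fin.ext (by (try simp only [] at h1 ⊢); omega), Fin.ext (by (try simp only [] at h2 ⊢); omega)⟩
      rw [← hua]
      exact Finset.mem_coe.1 hu
  -- counting away from column 0
  have hsub : Finset.univ.filter (fun v : Fin n × Fin 2 => v.1.val ≠ 0) ⊆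
      ((D.erase a0).erase a1).biUnion
        (fun u => Finset.univ.filter (fun v => (gridGraph n 2).Adj u v)) := by
    intro v hv
    rw [Finset.mem_filter] at hv
    obtain ⟨-, hv⟩ := hv
    obtain ⟨u, hu, hadj⟩ := hD v
    rw [SimpleGraph.deleteEdges_adj] at hadj
    obtain ⟨hadj1, hnot⟩ := hadj
    have hune0 : u ≠ a0 := by
      rintro rfl
      rw [grid_adj] at hadj1
      try simp only [ha0] at hadj1
      rcases hadj1 with ⟨h1 | h1, h2⟩ | ⟨h1, h2⟩
      · (try simp only [] at h1); omega
      · apply hnot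
        have hvb : v = b0 := by
          rw [hb0, Prod.ext_iff]
          exact ⟨Fin.ext (by (try simp only [] at h1 ⊢); omega), Fin.ext (by (try simp only [] at h2 ⊢); omega)⟩
        rw [hvb]
        simp [Sym2.eq_swap]
      · (try simp only [] at h1); omega
    have hune1 : u ≠ a1 := by
      rintro rfl
      rw [grid_adj] at hadj1
      try simp only [ha1] at hadj1
      rcases hadj1 with ⟨h1 | h1, h2⟩ | ⟨h1, h2⟩
      · (try simp only [] at h1); omega
      · apply hnot
        have hvb : v = b1 := by
          rw [hb1, Prod.ext_iff]
          exact ⟨Fin.ext (by (try simp only [] at h1 ⊢); omega), Fin.ext (by (try simp only [] at h2 ⊢); omega)⟩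
        rw [hvb]
        simp [Sym2.eq_swap]
      · (try simp only [] at h1); omega
    refine Finset.mem_biUnion.2 ⟨u, ?_, Finset.mem_filter.2 ⟨Finset.mem_univ _, hadj1.symm⟩⟩
    exact Finset.mem_erase.2 ⟨hune1, Finset.mem_erase.2 ⟨hune0, Finset.mem_coe.1 hu⟩⟩
  have hfilter : (Finset.univ.filter (fun v : Fin n × Fin 2 => v.1.val ≠ 0)).card = 2*n - 2 := by
    have heq : Finset.univ.filter (fun v : Fin n × Fin 2 => v.1.val ≠ 0) =
        Finset.univ \ {a0, a1} := by
      ext v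
      have h2v := v.2.isLt
      simp only [Finset.mem_filter, Finset.mem_univ, true_and, Finset.mem_sdiff,
        Finset.mem_insert, Finset.mem_singleton, ha0, ha1, Prod.ext_iff, Fin.ext_iff]
      omega
    rw [heq, Finset.card_sdiff_of_subset (Finset.subset_univ _)]
    have hc2 : ({a0, a1} : Finset (Fin n × Fin 2)).card = 2 := by
      rw [Finset.card_insert_of_notMem (by simpa using hne01), Finset.card_singleton]
    have hcu : (Finset.univ : Finset (Fin n × Fin 2)).card = 2*n := by
      simp [Finset.card_univ]; ring
    omega
  have h2 := Finset.card_biUnion_le (s := (D.erase a0).erase a1)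
    (t := fun u => Finset.univ.filter (fun v => (gridGraph n 2).Adj u v))
  have h3 : ∑ u ∈ (D.erase a0).erase a1,
      (Finset.univ.filter (fun v => (gridGraph n 2).Adj u v)).card ≤
      ((D.erase a0).erase a1).card * 3 := by
    calc _ ≤ ∑ _u ∈ (D.erase a0).erase a1, 3 :=
        Finset.sum_le_sum (fun u _ => nbr_card_le hn u _ (fun v hv => (Finset.mem_filter.1 hv).2))
      _ = _ := by simp [Finset.sum_const, mul_comm]
  have h1 := Finset.card_le_card hsub
  have hce : ((D.erase a0).erase a1).card = D.card - 2 := by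
    rw [Finset.card_erase_of_mem (Finset.mem_erase.2 ⟨hne01.symm, h1'⟩),
      Finset.card_erase_of_mem h0]
    omega
  have hDge : 2 ≤ D.card := Finset.one_lt_card.2 ⟨a0, h0, a1, h1', hne01⟩
  omega
lemma part2 {n k : ℕ} (hk : n = 3*k+2) :
    ∃ F : Finset (Sym2 (Fin n × Fin 2)), ↑F ⊆ (gridGraph n 2).edgeSet ∧ F.card = 2 ∧
      totalDomNum ((gridGraph n 2).deleteEdges ↑F) > totalDomNum (gridGraph n 2) := by
  classical
  have hn : 0 < n := by omega
  have hn1 : 1 < n := by omega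
  refine ⟨{s(((⟨0, hn⟩ : Fin n), (⟨0, Nat.zero_lt_two⟩ : Fin 2)),
             ((⟨1, hn1⟩ : Fin n), (⟨0, Nat.zero_lt_two⟩ : Fin 2))),
           s(((⟨0, hn⟩ : Fin n), (⟨1, Nat.one_lt_two⟩ : Fin 2)),
             ((⟨1, hn1⟩ : Fin n), (⟨1, Nat.one_lt_two⟩ : Fin 2)))},
    ?_, ?_, ?_⟩
  · intro e he
    rw [Finset.mem_coe, Finset.mem_insert, Finset.mem_singleton] at he
    rcases he with rfl | rfl <;>
      exact (SimpleGraph.mem_edgeSet _).2 (grid_adj.2 (Or.inl ⟨Or.inl rfl, rfl⟩))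
  · rw [Finset.card_insert_of_notMem, Finset.card_singleton]
    rw [Finset.mem_singleton]
    intro h
    rw [Sym2.eq_iff] at h
    rcases h with ⟨h1, h2⟩ | ⟨h1, h2⟩ <;>
      (rw [Prod.ext_iff, Fin.ext_iff, Fin.ext_iff] at h1; simp only [] at h1; omega)
  · rw [tdn_grid hk]
    have huniv : IsTotalDomSet ((gridGraph n 2).deleteEdges
        ↑({s(((⟨0, hn⟩ : Fin n), (⟨0, Nat.zero_lt_two⟩ : Fin 2)),
             ((⟨1, hn1⟩ : Fin n), (⟨0, Nat.zero_lt_two⟩ : Fin 2))),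
           s(((⟨0, hn⟩ : Fin n), (⟨1, Nat.one_lt_two⟩ : Fin 2)),
             ((⟨1, hn1⟩ : Fin n), (⟨1, Nat.one_lt_two⟩ : Fin 2)))} : Finset (Sym2 (Fin n × Fin 2))))
        ↑(Finset.univ : Finset (Fin n × Fin 2)) := by
      rintro ⟨⟨i, hi⟩, ⟨j, hj⟩⟩
      refine ⟨(⟨i, hi⟩, ⟨1-j, by omega⟩), by simp, ?_⟩
      rw [SimpleGraph.deleteEdges_adj]
      refine ⟨grid_adj.2 (Or.inr ⟨rfl, by show j+1 = 1-j ∨ (1-j)+1 = j; omega⟩), ?_⟩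
      intro hmem
      rw [Finset.coe_insert, Finset.coe_singleton, Set.mem_insert_iff,
        Set.mem_singleton_iff] at hmem
      rcases hmem with hh | hh <;> rw [Sym2.eq_iff] at hh <;>
        rcases hh with ⟨hh1, hh2⟩ | ⟨hh1, hh2⟩ <;>
        (simp only [Prod.ext_iff, Fin.ext_iff] at hh1 hh2; omega)
    have hmemS : (Finset.univ : Finset (Fin n × Fin 2)).card ∈
        {m | ∃ D : Finset (Fin n × Fin 2), IsTotalDomSet ((gridGraph n 2).deleteEdges
          ↑({s(((⟨0, hn⟩ : Fin n), (⟨0, Nat.zero_lt_two⟩ : Fin 2)),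
               ((⟨1, hn1⟩ : Fin n), (⟨0, Nat.zero_lt_two⟩ : Fin 2))),
             s(((⟨0, hn⟩ : Fin n), (⟨1, Nat.one_lt_two⟩ : Fin 2)),
               ((⟨1, hn1⟩ : Fin n), (⟨1, Nat.one_lt_two⟩ : Fin 2)))} : Finset (Sym2 (Fin n × Fin 2))))
          ↑D ∧ D.card = m} := ⟨_, huniv, rfl⟩
    have hsinf := Nat.sInf_mem (⟨_, hmemS⟩ : Set.Nonempty _)
    obtain ⟨D, hD, hcard⟩ := hsinf
    have hforced := forced_lb hk hn hn1 D hD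
    show totalDomNum _ > 2*k+2
    unfold totalDomNum
    omega

theorem total_bondage_grid_two_two_mod_three (n : ℕ) (hn : 2 ≤ n) (h : n % 3 = 2) :
    (∀ e ∈ (gridGraph n 2).edgeSet,
      totalDomNum ((gridGraph n 2).deleteEdges {e}) = totalDomNum (gridGraph n 2)) ∧
    (∃ F : Finset (Sym2 (Fin n × Fin 2)), ↑F ⊆ (gridGraph n 2).edgeSet ∧ F.card = 2 ∧
      totalDomNum ((gridGraph n 2).deleteEdges ↑F) > totalDomNum (gridGraph n 2)) ∧
    totalBondage (gridGraph n 2) = 2 := by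
  obtain ⟨k, hk⟩ : ∃ k, n = 3*k+2 := ⟨n/3, by omega⟩
  have hpart1 : ∀ e ∈ (gridGraph n 2).edgeSet,
      totalDomNum ((gridGraph n 2).deleteEdges {e}) = totalDomNum (gridGraph n 2) := by
    intro e he
    rw [part1 hk e he, tdn_grid hk]
  have hpart2 := part2 hk
  refine ⟨hpart1, hpart2, ?_⟩
  obtain ⟨F, hF1, hF2, hF3⟩ := hpart2
  have h2mem : 2 ∈ {m | ∃ F : Finset (Sym2 (Fin n × Fin 2)), ↑F ⊆ (gridGraph n 2).edgeSet ∧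
      F.card = m ∧ totalDomNum ((gridGraph n 2).deleteEdges ↑F) > totalDomNum (gridGraph n 2)} :=
    ⟨F, hF1, hF2, hF3⟩
  have hle : totalBondage (gridGraph n 2) ≤ 2 := Nat.sInf_le h2mem
  have hmem := Nat.sInf_mem (⟨2, h2mem⟩ : Set.Nonempty _)
  obtain ⟨F', hF'1, hF'2, hF'3⟩ := hmem
  rcases (show F'.card = 0 ∨ F'.card = 1 ∨ F'.card = 2 ∨ 2 < F'.card by omega)
    with h0 | h0 | h0 | h0
  · rw [Finset.card_eq_zero] at h0
    subst h0
    simp only [Finset.coe_empty, SimpleGraph.deleteEdges_empty] at hF'3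
    exact absurd hF'3 (lt_irrefl _)
  · obtain ⟨e, rfl⟩ := Finset.card_eq_one.1 h0
    have hee : e ∈ (gridGraph n 2).edgeSet := hF'1 (by simp)
    rw [Finset.coe_singleton] at hF'3
    rw [hpart1 e hee] at hF'3
    exact absurd hF'3 (lt_irrefl _)
  · unfold totalBondage
    omega
  · unfold totalBondage at hle ⊢
    omega
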